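/- The rank of a weakly acyclic automaton is equal to the number of its sink states. -/
import Mathlib


/-- The extension of the transition function to words. -/
def deltaStar {Q A : Type*} (δ : Q → A → Q) (q : Q) (w : List A) : Q := w.foldl δ q

/-- A simple cycle: pairwise distinct states `q 0, …, q (k-1)` together with letters
mapping each state of the cycle to the next one (cyclically). -/
def IsSimpleCycle {Q A : Type*} (δ : Q → A → Q) (k : ℕ) (q : Fin k → Q) : Prop :=
  0 < k ∧ Function.Injective q ∧
    ∃ x : Fin k → A, ∀ i : Fin k, δ (q i) (x i) = q ⟨(i.val + 1) % k, Nat.mod_lt _ i.pos⟩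

/-- An automaton is weakly acyclic if all its simple cycles are self-loops. -/
def WeaklyAcyclic {Q A : Type*} (δ : Q → A → Q) : Prop :=
  ∀ (k : ℕ) (q : Fin k → Q), IsSimpleCycle δ k q → k = 1

/-- A sink state is fixed by every letter. -/
def IsSink {Q A : Type*} (δ : Q → A → Q) (q : Q) : Prop := ∀ x : A, δ q x = q

/-- The word `w` synchronizes the set `S` of states. -/
def SyncsSet {Q A : Type*} (δ : Q → A → Q) (S : Finset Q) (w : List A) : Prop :=
  ∃ q : Q, ∀ s ∈ S, deltaStar δ s w = q

/-- A set of states is synchronizing if some word synchronizes it. -/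
def IsSyncSet {Q A : Type*} (δ : Q → A → Q) (S : Finset Q) : Prop :=
  ∃ w : List A, SyncsSet δ S w

/-- The rank of a word with respect to an automaton: the size of the image of the
state set under the word. -/
def wordRank {Q A : Type*} [Fintype Q] [DecidableEq Q] (δ : Q → A → Q) (w : List A) : ℕ :=
  (Finset.univ.image fun q => deltaStar δ q w).card

/-- The rank of an automaton: the minimum rank of a word with respect to it. -/
noncomputable def autRank {Q A : Type*} [Fintype Q] [DecidableEq Q] (δ : Q → A → Q) : ℕ :=
  sInf {r | ∃ w : List A, wordRank δ w = r}

/-- The rank of a word with respect to a subset of states. -/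
def subsetWordRank {Q A : Type*} [DecidableEq Q] (δ : Q → A → Q) (S : Finset Q)
    (w : List A) : ℕ :=
  (S.image fun q => deltaStar δ q w).card

/-- The rank of a subset of states: the minimum rank of a word with respect to it. -/
noncomputable def subsetRank {Q A : Type*} [DecidableEq Q] (δ : Q → A → Q) (S : Finset Q) : ℕ :=
  sInf {r | ∃ w : List A, subsetWordRank δ S w = r}

/-- `w^j`: the word obtained by `j` concatenations of `w`. -/
def wordPow {A : Type*} (w : List A) (j : ℕ) : List A := (List.replicate j w).flatten

section Aux

variable {Q A : Type*}

lemma deltaStar_append (δ : Q → A → Q) (q : Q) (u v : List A) :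
    deltaStar δ q (u ++ v) = deltaStar δ (deltaStar δ q u) v :=
  List.foldl_append ..

lemma deltaStar_sink (δ : Q → A → Q) {q : Q} (hq : IsSink δ q) (w : List A) :
    deltaStar δ q w = q := by
  induction w with
  | nil => rfl
  | cons a t ih =>
    show deltaStar δ (δ q a) t = q
    rw [hq a]; exact ih

lemma noTwoCycle (δ : Q → A → Q) (h : WeaklyAcyclic δ)
    {a b : Q} (hab : a ≠ b) (hu : ∃ u : List A, deltaStar δ a u = b)
    (hv : ∃ v : List A, deltaStar δ b v = a) : False := by
  classical
  set P : ℕ → Prop := fun n => ∃ (a b : Q) (u v : List A), a ≠ b ∧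
    deltaStar δ a u = b ∧ deltaStar δ b v = a ∧ u.length + v.length = n with hPdef
  have hne : {n | P n}.Nonempty := by
    obtain ⟨u, hu⟩ := hu; obtain ⟨v, hv⟩ := hv
    exact ⟨u.length + v.length, a, b, u, v, hab, hu, hv, rfl⟩
  set n := sInf {n | P n} with hndef
  have hmem : P n := Nat.sInf_mem hne
  have hmin : ∀ m, m < n → ¬ P m := fun m hm hPm => Nat.notMem_of_lt_sInf hm hPm
  obtain ⟨q, p, u, v, hqp, hu, hv, hlen⟩ := hmem
  set w : List A := u ++ v with hwdef
  have hw : deltaStar δ q w = q := by rw [hwdef, deltaStar_append, hu, hv]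
  have hwl : w.length = n := by rw [hwdef, List.length_append]; exact hlen
  have hu0 : u ≠ [] := by rintro rfl; exact hqp hu
  have hv0 : v ≠ [] := by rintro rfl; exact hqp hv.symm
  have hn2 : 2 ≤ n := by
    have h1 := List.length_pos_iff.2 hu0
    have h2 := List.length_pos_iff.2 hv0
    omega
  set s : ℕ → Q := fun i => deltaStar δ q (w.take i) with hsdef
  have hs0 : s 0 = q := rfl
  have hsn : s n = q := by
    show deltaStar δ q (w.take n) = q
    rw [← hwl, List.take_length]; exact hw
  have hseg : ∀ i j, i ≤ j → j ≤ n →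
      deltaStar δ (s i) ((w.drop i).take (j - i)) = s j := by
    intro i j hij hjn
    have ht : w.take j = w.take i ++ (w.drop i).take (j - i) := by
      rw [← List.take_add]; congr 1; omega
    show deltaStar δ (deltaStar δ q (w.take i)) _ = deltaStar δ q (w.take j)
    rw [ht, deltaStar_append]
  have hslen : ∀ i j, i ≤ j → j ≤ n → ((w.drop i).take (j - i)).length = j - i := by
    intro i j hij hjn
    rw [List.length_take, List.length_drop, hwl]; omega
  have hsu : s u.length = p := by
    show deltaStar δ q (w.take u.length) = p
    rw [hwdef, List.take_left]; exact hu
  have hgi : ∀ i, i < n → i < w.length := by intro i hi; omega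
  have hstep : ∀ i, ∀ hi : i < n, δ (s i) (w.get ⟨i, hgi i hi⟩) = s (i + 1) := by
    intro i hi
    have h1 : w.take (i + 1) = w.take i ++ [w.get ⟨i, hgi i hi⟩] := by
      rw [List.take_succ, List.getElem?_eq_getElem (hgi i hi)]; rfl
    show δ (deltaStar δ q (w.take i)) _ = deltaStar δ q (w.take (i + 1))
    rw [h1, deltaStar_append]; rfl
  have hdist : ∀ i j, i < j → j < n → s i ≠ s j := by
    intro i j hij hjn hEq
    by_cases hmid : ∃ m, i < m ∧ m < j ∧ s m ≠ s i
    · obtain ⟨m, him, hmj, hneq⟩ := hmid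
      apply hmin (j - i) (by omega)
      refine ⟨s i, s m, (w.drop i).take (m - i), (w.drop m).take (j - m),
        fun hh => hneq hh.symm, hseg i m him.le (by omega), ?_, ?_⟩
      · rw [hseg m j hmj.le (by omega)]; exact hEq.symm
      · rw [hslen i m him.le (by omega), hslen m j hmj.le (by omega)]; omega
    · push_neg at hmid
      set w' : List A := w.take i ++ w.drop j with hw'def
      have hlti : (w.take i).length = i := by rw [List.length_take, hwl]; omega
      have hlw' : w'.length = i + (n - j) := by
        rw [hw'def, List.length_append, List.length_drop, hlti, hwl]
      have hw'q : deltaStar δ q w' = q := by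
        rw [hw'def, deltaStar_append]
        show deltaStar δ (s i) (w.drop j) = q
        rw [hEq]
        show deltaStar δ (deltaStar δ q (w.take j)) (w.drop j) = q
        rw [← deltaStar_append, List.take_append_drop]; exact hw
      have hpre : ∀ t, t ≤ i → w'.take t = w.take t := by
        intro t ht
        rw [hw'def, List.take_append_of_le_length (by omega), List.take_take]
        congr 1; omega
      have hlun : u.length ≤ n := by omega
      have hfind : ∃ t, t ≤ w'.length ∧ deltaStar δ q (w'.take t) ≠ q := by
        by_cases hc1 : u.length ≤ i
        · refine ⟨u.length, by omega, ?_⟩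
          rw [hpre u.length hc1]
          show s u.length ≠ q
          rw [hsu]; exact Ne.symm hqp
        · by_cases hc2 : u.length < j
          · refine ⟨i, by omega, ?_⟩
            rw [hpre i le_rfl]
            show s i ≠ q
            rw [← hmid u.length (by omega) hc2, hsu]; exact Ne.symm hqp
          · push_neg at hc2
            refine ⟨i + (u.length - j), by omega, ?_⟩
            have htk : w'.take (i + (u.length - j)) =
                w.take i ++ (w.drop j).take (u.length - j) := by
              rw [hw'def, List.take_append]
              congr 1
              · rw [List.take_take]; congr 1; omega
              · rw [hlti]; congr 1; omega
            rw [htk, deltaStar_append]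
            show deltaStar δ (s i) _ ≠ q
            rw [hEq]
            have := hseg j u.length hc2 hlun
            rw [show u.length - j = u.length - j from rfl] at this
            rw [this, hsu]
            exact Ne.symm hqp
      obtain ⟨t, htle, htne⟩ := hfind
      apply hmin w'.length (by omega)
      refine ⟨q, deltaStar δ q (w'.take t), w'.take t, w'.drop t,
        fun hh => htne hh.symm, rfl, ?_, ?_⟩
      · rw [← deltaStar_append, List.take_append_drop]; exact hw'q
      · rw [List.length_take, List.length_drop]; omega
  have hinj : Function.Injective (fun i : Fin n => s i.val) := by
    intro a b hab'
    by_contra hne'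
    have hvne : a.val ≠ b.val := fun hh => hne' (Fin.ext hh)
    rcases Nat.lt_or_ge a.val b.val with hlt | hge
    · exact hdist a.val b.val hlt b.isLt hab'
    · exact hdist b.val a.val (by omega) a.isLt hab'.symm
  have hcyc : IsSimpleCycle δ n (fun i : Fin n => s i.val) := by
    refine ⟨by omega, hinj, fun i : Fin n => w.get ⟨i.val, hgi i.val i.isLt⟩, ?_⟩
    intro i
    show δ (s i.val) _ = s ((i.val + 1) % n)
    by_cases hi : i.val + 1 < n
    · rw [Nat.mod_eq_of_lt hi]; exact hstep i.val i.isLt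
    · have hieq : i.val + 1 = n := by omega
      rw [hstep i.val i.isLt, hieq, Nat.mod_self, hsn]; exact hs0.symm
  have := h n _ hcyc
  omega

end Aux

section Aux2

variable {Q A : Type*}

lemma exists_sink_word [Fintype Q] (δ : Q → A → Q) (h : WeaklyAcyclic δ) (q : Q) :
    ∃ w : List A, IsSink δ (deltaStar δ q w) := by
  classical
  let RS : Q → Finset Q := fun q =>
    Finset.univ.filter (fun p => ∃ w : List A, deltaStar δ q w = p)
  have hself : ∀ q, q ∈ RS q := fun q =>
    Finset.mem_filter.mpr ⟨Finset.mem_univ _, ⟨[], rfl⟩⟩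
  have key : ∀ N (q : Q), (RS q).card ≤ N → ∃ w : List A, IsSink δ (deltaStar δ q w) := by
    intro N
    induction N with
    | zero =>
      intro q hq
      have := Finset.card_pos.mpr ⟨q, hself q⟩
      omega
    | succ N ih =>
      intro q hq
      by_cases hs : IsSink δ q
      · exact ⟨[], hs⟩
      · simp only [IsSink, not_forall] at hs
        obtain ⟨x, hx⟩ := hs
        have hsub : RS (δ q x) ⊆ RS q := by
          intro r hr
          obtain ⟨-, wr, hwr⟩ := Finset.mem_filter.mp hr
          exact Finset.mem_filter.mpr ⟨Finset.mem_univ _, ⟨x :: wr, hwr⟩⟩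
        have hqnot : q ∉ RS (δ q x) := by
          intro hqmem
          obtain ⟨-, wv, hwv⟩ := Finset.mem_filter.mp hqmem
          exact noTwoCycle δ h (Ne.symm hx) ⟨[x], rfl⟩ ⟨wv, hwv⟩
        have hcard : (RS (δ q x)).card < (RS q).card :=
          Finset.card_lt_card ⟨hsub, fun hss => hqnot (hss (hself q))⟩
        obtain ⟨w, hw⟩ := ih (δ q x) (by omega)
        exact ⟨x :: w, hw⟩
  exact key (RS q).card q le_rfl

lemma all_to_sink [Fintype Q] (δ : Q → A → Q) (h : WeaklyAcyclic δ) :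
    ∃ w : List A, ∀ q : Q, IsSink δ (deltaStar δ q w) := by
  classical
  have key : ∀ S : Finset Q, ∃ w : List A, ∀ q ∈ S, IsSink δ (deltaStar δ q w) := by
    intro S
    induction S using Finset.induction_on with
    | empty => exact ⟨[], by simp⟩
    | @insert a S _ ih =>
      obtain ⟨w, hw⟩ := ih
      obtain ⟨w', hw'⟩ := exists_sink_word δ h (deltaStar δ a w)
      refine ⟨w ++ w', ?_⟩
      intro q hq
      rw [deltaStar_append]
      rcases Finset.mem_insert.mp hq with rfl | hq
      · exact hw'
      · rw [deltaStar_sink δ (hw q hq) w']; exact hw q hq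
  obtain ⟨w, hw⟩ := key Finset.univ
  exact ⟨w, fun q => hw q (Finset.mem_univ q)⟩

end Aux2

/-- The rank of a weakly acyclic automaton equals the number of its sink states. -/
theorem stmt2 {Q A : Type*} [Fintype Q] [DecidableEq Q] [Fintype A] (δ : Q → A → Q)
    (h : WeaklyAcyclic δ) :
    autRank δ = {q : Q | IsSink δ q}.ncard := by
  classical
  set Sk : Finset Q := Finset.univ.filter (fun q => IsSink δ q) with hSkdef
  have hSk : {q : Q | IsSink δ q}.ncard = Sk.card := by
    rw [← Set.ncard_coe_finset]
    congr 1
    ext q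
    simp [hSkdef]
  have lower : ∀ w : List A, Sk.card ≤ wordRank δ w := by
    intro w
    apply Finset.card_le_card
    intro q hq
    have hs : IsSink δ q := (Finset.mem_filter.mp hq).2
    exact Finset.mem_image.mpr ⟨q, Finset.mem_univ q, deltaStar_sink δ hs w⟩
  obtain ⟨w₀, hw₀⟩ := all_to_sink δ h
  have upper : wordRank δ w₀ ≤ Sk.card := by
    apply Finset.card_le_card
    intro q hq
    obtain ⟨r, -, rfl⟩ := Finset.mem_image.mp hq
    exact Finset.mem_filter.mpr ⟨Finset.mem_univ _, hw₀ r⟩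
  rw [hSk]
  apply le_antisymm
  · exact Nat.sInf_le ⟨w₀, le_antisymm upper (lower w₀)⟩
  · have hne : {r | ∃ w : List A, wordRank δ w = r}.Nonempty := ⟨_, w₀, rfl⟩
    obtain ⟨w₁, hw₁⟩ := Nat.sInf_mem hne
    show Sk.card ≤ autRank δ
    rw [autRank, ← hw₁]
    exact lower w₁
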